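/- Let f ∈ ℂ[x_1,...,x_d] be a polynomial of minimal total degree among all nonzero polynomials vanishing on a finite set V'' ⊆ ℂ^d, and suppose deg f ≥ 1. If f additionally vanishes identically on a set of lines L'' such that through every point v ∈ V'' there pass at least d lines of L'' with linearly independent directions, then we reach a contradiction; hence there exists a point v ∈ V'' such that the directions of all lines of L'' through v span a linear subspace of dimension at most d−1 (a 'flat' point). -/

import Mathlib

open MvPolynomial

/-- `L` is an affine (complex) line in the module `M`. -/
def IsLine {M : Type*} [AddCommGroup M] [Module ℂ M] (L : Set M) : Prop :=
  ∃ a b : M, b ≠ 0 ∧ L = {p | ∃ t : ℂ, p = a + t • b}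

/-- The directions of the lines of the family `Ls` passing through `v`. -/
def dirsThrough (d : ℕ) (Ls : Set (Set (Fin d → ℂ))) (v : Fin d → ℂ) :
    Set (Fin d → ℂ) :=
  {b | ∃ L ∈ Ls, v ∈ L ∧ L = {p | ∃ t : ℂ, p = v + t • b}}

lemma coeff_pderiv' {d : ℕ} (x : Fin d) (f : MvPolynomial (Fin d) ℂ) (m : Fin d →₀ ℕ) :
    MvPolynomial.coeff m (MvPolynomial.pderiv x f)
      = (m x + 1 : ℕ) * MvPolynomial.coeff (m + Finsupp.single x 1) f := by
  induction f using MvPolynomial.induction_on' with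
  | monomial s a =>
    rw [pderiv_monomial, MvPolynomial.coeff_monomial, MvPolynomial.coeff_monomial]
    by_cases hs : s = m + Finsupp.single x 1
    · subst hs
      have h1 : m + Finsupp.single x 1 - Finsupp.single x 1 = m := by
        ext y
        by_cases hy : y = x
        · subst hy; simp [Finsupp.tsub_apply]
        · simp [Finsupp.tsub_apply, Finsupp.single_apply, Ne.symm hy]
      have h2 : (m + Finsupp.single x 1 : Fin d →₀ ℕ) x = m x + 1 := by
        simp [Finsupp.add_apply]
      rw [if_pos h1, h2]
      simp only [if_true, eq_self_iff_true]
      push_cast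
      ring
    · rw [if_neg hs]
      by_cases hsm : s - Finsupp.single x 1 = m
      · rw [if_pos hsm]
        rcases Nat.eq_zero_or_pos (s x) with h0 | h0
        · simp [h0]
        · exfalso
          apply hs
          ext y
          by_cases hy : y = x
          · subst hy
            have := congrArg (fun g => g y) hsm
            simp [Finsupp.tsub_apply] at this
            simp [Finsupp.add_apply, ← this]
            omega
          · have := congrArg (fun g => g y) hsm
            simp [Finsupp.tsub_apply, Finsupp.single_apply, Ne.symm hy] at this ⊢
            omega
      · rw [if_neg hsm, mul_zero]
  | add p q hp hq => simp [hp, hq, mul_add]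

lemma pderiv_totalDegree_lt {d : ℕ} (f : MvPolynomial (Fin d) ℂ) (hdeg : 1 ≤ f.totalDegree)
    (x : Fin d) : (MvPolynomial.pderiv x f).totalDegree < f.totalDegree := by
  rw [MvPolynomial.totalDegree,
    Finset.sup_lt_iff (show (⊥ : ℕ) < f.totalDegree by exact hdeg)]
  intro m hm
  rw [MvPolynomial.mem_support_iff, coeff_pderiv'] at hm
  have h2 : MvPolynomial.coeff (m + Finsupp.single x 1) f ≠ 0 := fun h => hm (by simp [h])
  have h3 := MvPolynomial.le_totalDegree (MvPolynomial.mem_support_iff.mpr h2)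
  have h4 : (m + Finsupp.single x 1).sum (fun _ n => n) = m.sum (fun _ n => n) + 1 := by
    rw [Finsupp.sum_add_index (by simp) (by intros; rfl), Finsupp.sum_single_index rfl]
  omega

lemma exists_pderiv_ne_zero {d : ℕ} (f : MvPolynomial (Fin d) ℂ) (hdeg : 1 ≤ f.totalDegree) :
    ∃ x : Fin d, MvPolynomial.pderiv x f ≠ 0 := by
  have hne : f.totalDegree ≠ 0 := by omega
  rw [Ne, MvPolynomial.totalDegree_eq_zero_iff] at hne
  push_neg at hne
  obtain ⟨m, hm, x, hx⟩ := hne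
  refine ⟨x, fun h => ?_⟩
  have hthis := coeff_pderiv' x f (m - Finsupp.single x 1)
  rw [h] at hthis
  have hms : m - Finsupp.single x 1 + Finsupp.single x 1 = m := by
    ext y
    by_cases hy : y = x
    · subst hy; simp [Finsupp.tsub_apply]; omega
    · simp [Finsupp.tsub_apply, Finsupp.single_apply, Ne.symm hy]
  rw [hms] at hthis
  rw [MvPolynomial.mem_support_iff] at hm
  simp only [MvPolynomial.coeff_zero] at hthis
  have hcast : (((m - Finsupp.single x 1 : Fin d →₀ ℕ) x + 1 : ℕ) : ℂ) ≠ 0 :=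
    Nat.cast_ne_zero.mpr (Nat.succ_ne_zero _)
  exact hm ((mul_eq_zero.mp hthis.symm).resolve_left hcast)

lemma eval_aeval' {d : ℕ} (g : Fin d → Polynomial ℂ) (p : MvPolynomial (Fin d) ℂ) (t : ℂ) :
    (MvPolynomial.aeval g p).eval t = MvPolynomial.eval (fun i => (g i).eval t) p := by
  induction p using MvPolynomial.induction_on with
  | C a => simp
  | add p q hp hq => simp [hp, hq]
  | mul_X p i hp => simp [hp]

lemma derivative_aeval_line {d : ℕ} (v b : Fin d → ℂ) (p : MvPolynomial (Fin d) ℂ) :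
    Polynomial.derivative (MvPolynomial.aeval
        (fun i => Polynomial.C (v i) + Polynomial.C (b i) * Polynomial.X) p)
      = ∑ i, Polynomial.C (b i) *
          MvPolynomial.aeval (fun i => Polynomial.C (v i) + Polynomial.C (b i) * Polynomial.X)
            (MvPolynomial.pderiv i p) := by
  induction p using MvPolynomial.induction_on with
  | C a => simp
  | add p q hp hq => simp [hp, hq, mul_add, Finset.sum_add_distrib]
  | mul_X p i hp =>
    have key : ∀ j : Fin d, Polynomial.C (b j) *
        MvPolynomial.aeval (fun i => Polynomial.C (v i) + Polynomial.C (b i) * Polynomial.X)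
          (MvPolynomial.pderiv j (p * MvPolynomial.X i))
        = (Polynomial.C (b j) *
            MvPolynomial.aeval (fun i => Polynomial.C (v i) + Polynomial.C (b i) * Polynomial.X)
              (MvPolynomial.pderiv j p)) *
            (Polynomial.C (v i) + Polynomial.C (b i) * Polynomial.X)
          + (if j = i then
              MvPolynomial.aeval (fun i => Polynomial.C (v i) + Polynomial.C (b i) * Polynomial.X)
                p * Polynomial.C (b i) else 0) := by
      intro j
      by_cases hj : j = i
      · subst hj
        simp only [pderiv_mul, MvPolynomial.pderiv_X_self, mul_one, map_add, map_mul,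
          MvPolynomial.aeval_X, if_pos rfl, if_true]
        ring
      · simp only [pderiv_mul, MvPolynomial.pderiv_X_of_ne (Ne.symm hj), mul_zero, map_add,
          map_mul, map_zero, MvPolynomial.aeval_X, if_neg hj, add_zero]
        ring
    rw [map_mul, MvPolynomial.aeval_X, Polynomial.derivative_mul, hp,
      Finset.sum_congr rfl (fun j _ => key j), Finset.sum_add_distrib, ← Finset.sum_mul,
      Finset.sum_ite_eq' Finset.univ i, if_pos (Finset.mem_univ i)]
    congr 1
    simp

/-- If `f` is a nonzero polynomial of minimal degree (≥ 1) vanishing on a finite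
nonempty set `V''`, and `f` vanishes identically on every line of a finite
family `L''` of lines, then some point of `V''` is flat: the directions of the
lines of `L''` through it span a subspace of dimension at most `d − 1`. -/
theorem stmt19 (d : ℕ) (V'' : Set (Fin d → ℂ)) (hVfin : V''.Finite)
    (hVne : V''.Nonempty)
    (L'' : Set (Set (Fin d → ℂ))) (hLfin : L''.Finite)
    (hline : ∀ L ∈ L'', IsLine L)
    (f : MvPolynomial (Fin d) ℂ) (hf : f ≠ 0) (hdeg : 1 ≤ f.totalDegree)
    (hvanV : ∀ v ∈ V'', eval v f = 0)
    (hmin : ∀ g : MvPolynomial (Fin d) ℂ, g ≠ 0 → (∀ v ∈ V'', eval v g = 0) →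
      f.totalDegree ≤ g.totalDegree)
    (hvanL : ∀ L ∈ L'', ∀ p ∈ L, eval p f = 0) :
    ∃ v ∈ V'', Module.finrank ℂ
      (Submodule.span ℂ (dirsThrough d L'' v)) ≤ d - 1 := by
  by_contra hcon
  push_neg at hcon
  have hder : ∀ v ∈ V'', ∀ i : Fin d, eval v (MvPolynomial.pderiv i f) = 0 := by
    intro v hv i
    have hrank := hcon v hv
    have hle : Module.finrank ℂ (Submodule.span ℂ (dirsThrough d L'' v)) ≤ d := by
      have := Submodule.finrank_le (Submodule.span ℂ (dirsThrough d L'' v))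
      simpa using this
    have htop : Submodule.span ℂ (dirsThrough d L'' v) = ⊤ := by
      apply Submodule.eq_top_of_finrank_eq
      simp only [Module.finrank_fin_fun]
      omega
    -- every element of the span satisfies the directional-derivative identity
    have hQ : ∀ c ∈ Submodule.span ℂ (dirsThrough d L'' v),
        ∑ j, c j * eval v (MvPolynomial.pderiv j f) = 0 := by
      intro c hc
      induction hc using Submodule.span_induction with
      | mem b hb =>
        obtain ⟨L, hL, hvL, hLeq⟩ := hb
        have hgt : ∀ t : ℂ,
            (fun i => Polynomial.eval t
              (Polynomial.C (v i) + Polynomial.C (b i) * Polynomial.X)) = v + t • b := by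
          intro t; funext i
          simp only [Polynomial.eval_add, Polynomial.eval_mul, Polynomial.eval_C,
            Polynomial.eval_X, Pi.add_apply, Pi.smul_apply, smul_eq_mul]
          ring
        have hP : MvPolynomial.aeval
            (fun i => Polynomial.C (v i) + Polynomial.C (b i) * Polynomial.X) f = 0 := by
          apply Polynomial.funext
          intro t
          rw [eval_aeval', hgt t, Polynomial.eval_zero]
          exact hvanL L hL _ (hLeq ▸ ⟨t, rfl⟩)
        have hD := derivative_aeval_line v b f
        calc ∑ j, b j * eval v (MvPolynomial.pderiv j f)
            = Polynomial.eval 0 (∑ j, Polynomial.C (b j) *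
                MvPolynomial.aeval
                  (fun i => Polynomial.C (v i) + Polynomial.C (b i) * Polynomial.X)
                  (MvPolynomial.pderiv j f)) := by
              rw [Polynomial.eval_finset_sum]
              refine Finset.sum_congr rfl fun j _ => ?_
              rw [Polynomial.eval_mul, Polynomial.eval_C, eval_aeval', hgt 0]
              simp
          _ = Polynomial.eval 0 (Polynomial.derivative (MvPolynomial.aeval
                (fun i => Polynomial.C (v i) + Polynomial.C (b i) * Polynomial.X) f)) := by
              rw [hD]
          _ = 0 := by rw [hP, map_zero, Polynomial.eval_zero]
      | zero => simp
      | add x y _ _ hx hy => simp [Finset.sum_add_distrib, add_mul, hx, hy]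
      | smul a x _ hx =>
        simp only [Pi.smul_apply, smul_eq_mul, mul_assoc, ← Finset.mul_sum, hx, mul_zero]
    have := hQ (Pi.single i 1) (htop ▸ Submodule.mem_top)
    rw [Finset.sum_eq_single i (fun j _ hj => by simp [Pi.single_apply, hj])
      (fun h => absurd (Finset.mem_univ i) h)] at this
    simpa using this
  obtain ⟨x, hx⟩ := exists_pderiv_ne_zero f hdeg
  have h1 := hmin (MvPolynomial.pderiv x f) hx (fun v hv => hder v hv x)
  have h2 := pderiv_totalDegree_lt f hdeg x
  omega
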